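/- For any two monic real Hurwitz polynomials a(s) = s² + a₁s + a₂ and b(s) = s² + b₁s + b₂ of degree 2, there exists a real polynomial c of degree 2 such that c/a and c/b are both strictly positive real. -/

import Mathlib

open Polynomial

/-- A real polynomial is Hurwitz stable if all of its complex roots have
negative real part. -/
def Hurwitz (p : Polynomial ℝ) : Prop :=
  ∀ z : ℂ, (p.map (algebraMap ℝ ℂ)).IsRoot z → z.re < 0

/-- Evaluation of a real polynomial at the purely imaginary number `i ω`. -/
noncomputable def evalI (p : Polynomial ℝ) (ω : ℝ) : ℂ :=
  Polynomial.aeval ((ω : ℂ) * Complex.I) p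

/-- `c / q` is strictly positive real. -/
def SPR (c q : Polynomial ℝ) : Prop :=
  c.degree = q.degree ∧ Hurwitz q ∧ ∀ ω : ℝ, 0 < (evalI c ω / evalI q ω).re

lemma quad_root_iff (p q : ℝ) (z : ℂ) :
    ((X^2 + C p * X + C q : ℝ[X]).map (algebraMap ℝ ℂ)).IsRoot z ↔ z^2 + p*z + q = 0 := by
  simp [IsRoot, Polynomial.eval_map]

lemma quad_degree (p q : ℝ) : ((X^2 + C p * X + C q : ℝ[X])).degree = 2 := by
  have : (X^2 + C p * X + C q : ℝ[X]) = C 1 * X^2 + C p * X + C q := by simp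
  rw [this, degree_quadratic one_ne_zero]

lemma hurwitz_coeff_pos (p q : ℝ) (h : Hurwitz (X^2 + C p * X + C q)) : 0 < p ∧ 0 < q := by
  have hdeg : (0:WithBot ℕ) < ((X^2 + C p * X + C q : ℝ[X]).map (algebraMap ℝ ℂ)).degree := by
    rw [Polynomial.degree_map, quad_degree]
    norm_num
  obtain ⟨z, hz⟩ := Complex.exists_root hdeg
  have h1 : z.re < 0 := h z hz
  have hz' : z^2 + p*z + q = 0 := (quad_root_iff p q z).mp hz
  have hz2 : (-(p:ℂ) - z)^2 + p*(-(p:ℂ) - z) + q = 0 := by linear_combination hz'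
  have h2 : (-(p:ℂ) - z).re < 0 := h _ ((quad_root_iff p q _).mpr hz2)
  simp [Complex.sub_re, Complex.neg_re] at h2
  have hre := congrArg Complex.re hz'
  have him := congrArg Complex.im hz'
  simp [Complex.add_re, Complex.add_im, Complex.mul_re, Complex.mul_im, pow_two] at hre him
  constructor
  · linarith
  · rcases mul_eq_zero.mp (show z.im * (2*z.re + p) = 0 by linarith) with h3 | h3
    · nlinarith
    · nlinarith

lemma evalI_quad (p q ω : ℝ) :
    evalI (X^2 + C p * X + C q) ω = Complex.mk (q - ω^2) (p * ω) := by
  simp [evalI, Complex.ext_iff, pow_two, Complex.mul_re, Complex.mul_im]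
  ring

lemma key (p q γ : ℝ) (hq : 0 < q) (hγ : 1 + q ≤ γ * p)
    (hH : Hurwitz (X^2 + C p * X + C q)) (ω : ℝ) :
    0 < (evalI (X^2 + C γ * X + C 1) ω / evalI (X^2 + C p * X + C q) ω).re := by
  have hv : evalI (X^2 + C p * X + C q) ω ≠ 0 := by
    intro h0
    have : ((ω:ℂ) * Complex.I).re < 0 := hH _ (by
      rw [quad_root_iff]
      rw [evalI] at h0
      simpa [Polynomial.eval_map] using h0)
    simp at this
  rw [evalI_quad, evalI_quad] at *
  rw [Complex.div_re, ← add_div]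
  apply div_pos
  · simp only [Complex.normSq_mk]
    nlinarith [sq_nonneg ω, sq_nonneg (ω^2), sq_nonneg (ω^2-1), sq_nonneg (p*ω)]
  · exact Complex.normSq_pos.mpr hv

theorem stmt_3 (a₁ a₂ b₁ b₂ : ℝ)
    (ha : Hurwitz (X ^ 2 + C a₁ * X + C a₂))
    (hb : Hurwitz (X ^ 2 + C b₁ * X + C b₂)) :
    ∃ c : Polynomial ℝ, c.degree = 2 ∧
      SPR c (X ^ 2 + C a₁ * X + C a₂) ∧ SPR c (X ^ 2 + C b₁ * X + C b₂) := by
  obtain ⟨ha1, ha2⟩ := hurwitz_coeff_pos a₁ a₂ ha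
  obtain ⟨hb1, hb2⟩ := hurwitz_coeff_pos b₁ b₂ hb
  set γ : ℝ := (1 + a₂)/a₁ + (1 + b₂)/b₁ with hγdef
  have hga : 1 + a₂ ≤ γ * a₁ := by
    rw [hγdef]
    rw [add_mul, div_mul_cancel₀ _ (ne_of_gt ha1)]
    have : 0 ≤ (1 + b₂)/b₁ * a₁ := by positivity
    linarith
  have hgb : 1 + b₂ ≤ γ * b₁ := by
    rw [hγdef]
    rw [add_mul, div_mul_cancel₀ _ (ne_of_gt hb1)]
    have : 0 ≤ (1 + a₂)/a₁ * b₁ := by positivity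
    linarith
  refine ⟨X^2 + C γ * X + C 1, quad_degree γ 1, ⟨?_, ha, key a₁ a₂ γ ha2 hga ha⟩,
    ⟨?_, hb, key b₁ b₂ γ hb2 hgb hb⟩⟩
  · rw [quad_degree, quad_degree]
  · rw [quad_degree, quad_degree]
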